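/- For every fixed a ∈ (0,1), the limit as s → ∞ of a^{(1+s)/(2s)} (1−a)^{−1/(2s)} ∫_a^1 (1−x)^{1/(2s)} x^{−(1+s)/(2s)} (1/2 + 1/(2s(1−x))) dx equals 2√a − a. -/

import Mathlib

open Filter MeasureTheory Set intervalIntegral

noncomputable def intI (s a y : ℝ) : ℝ :=
  ∫ x in a..y, (1 - x) ^ (1 / (2 * s)) / x ^ ((1 + s) / (2 * s)) *
    (1 / 2 + 1 / (2 * s) * (1 / (1 - x)))

lemma intI_eq (a : ℝ) (ha : a ∈ Set.Ioo (0 : ℝ) 1) (s : ℝ) (hs : 1 ≤ s) :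
    intI s a 1 = (1 - a) ^ (1 / (2 * s)) * a ^ (1 / 2 - 1 / (2 * s))
      + ∫ x in a..1, (1 - x) ^ (1 / (2 * s)) * x ^ (-(1 / 2 + 1 / (2 * s))) := by
  obtain ⟨ha0, ha1⟩ := ha
  have hs0 : (0 : ℝ) < s := by linarith
  set c : ℝ := 1 / (2 * s) with hc_def
  have hc0 : 0 < c := by positivity
  have hc2 : c ≤ 1 / 2 := by
    rw [hc_def, div_le_div_iff₀ (by positivity) (by norm_num)]
    linarith
  have he : (1 + s) / (2 * s) = 1 / 2 + c := by
    rw [hc_def]; field_simp; ring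
  set F : ℝ → ℝ := fun x => -((1 - x) ^ c * x ^ (1 / 2 - c)) with hF_def
  set f' : ℝ → ℝ := fun x =>
    (1 - x) ^ (c - 1) * (c * x ^ (-(1 / 2 + c))) - 1 / 2 * ((1 - x) ^ c * x ^ (-(1 / 2 + c)))
    with hf'_def
  set g : ℝ → ℝ := fun x => (1 - x) ^ c * x ^ (-(1 / 2 + c)) with hg_def
  -- continuity helpers
  have hcont_pow : Continuous fun x : ℝ => (1 - x) ^ c :=
    (continuous_const.sub continuous_id).rpow_const (fun x => Or.inr hc0.le)
  have hcont_x : ContinuousOn (fun x : ℝ => x ^ (-(1 / 2 + c))) (Icc a 1) := by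
    intro x hx
    exact (Real.continuousAt_rpow_const x _ (Or.inl (by nlinarith [hx.1]))).continuousWithinAt
  have huIcc : uIcc a 1 = Icc a 1 := uIcc_of_le ha1.le
  have hg_int : IntervalIntegrable g volume a 1 := by
    apply ContinuousOn.intervalIntegrable
    rw [huIcc]
    exact (hcont_pow.continuousOn).mul hcont_x
  have hbase_int : IntervalIntegrable (fun x : ℝ => (1 - x) ^ (c - 1)) volume a 1 := by
    have h := (intervalIntegrable_rpow' (a := 1 - a) (b := 1 - 1)
      (show (-1 : ℝ) < c - 1 by linarith)).comp_sub_left 1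
    simpa using h
  have hf'_int : IntervalIntegrable f' volume a 1 := by
    have h1 : IntervalIntegrable (fun x : ℝ => (1 - x) ^ (c - 1) * (c * x ^ (-(1 / 2 + c))))
        volume a 1 := by
      apply hbase_int.mul_continuousOn
      rw [huIcc]
      exact continuousOn_const.mul hcont_x
    exact h1.sub (hg_int.const_mul (1 / 2))
  have hF_cont : ContinuousOn F (Icc a 1) := by
    apply ContinuousOn.neg
    apply hcont_pow.continuousOn.mul
    intro x hx
    exact (Real.continuousAt_rpow_const x _ (Or.inl (by nlinarith [hx.1]))).continuousWithinAt
  have hF_deriv : ∀ x ∈ Ioo a 1, HasDerivAt F (f' x) x := by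
    intro x hx
    have hx0 : 0 < x := lt_trans ha0 hx.1
    have hu : 0 < 1 - x := by linarith [hx.2]
    have hd : HasDerivAt (fun y : ℝ => 1 - y) (-1) x := by
      simpa using (hasDerivAt_id x).const_sub 1
    have h1 : HasDerivAt (fun y : ℝ => (1 - y) ^ c) (-1 * c * (1 - x) ^ (c - 1)) x :=
      hd.rpow_const (Or.inl hu.ne')
    have h2 : HasDerivAt (fun y : ℝ => y ^ (1 / 2 - c)) ((1 / 2 - c) * x ^ (1 / 2 - c - 1)) x :=
      Real.hasDerivAt_rpow_const (Or.inl hx0.ne')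
    have h3 := (h1.mul h2).neg
    refine h3.congr_deriv ?_
    symm
    have e1 : (1 - x) ^ (c - 1) = (1 - x) ^ c / (1 - x) := by
      rw [Real.rpow_sub hu, Real.rpow_one]
    have e2 : x ^ (1 / 2 - c - 1) = x ^ (-(1 / 2 + c)) := by
      congr 1; ring
    have e3 : x ^ (1 / 2 - c) = x ^ (-(1 / 2 + c)) * x := by
      have h := Real.rpow_add hx0 (-(1 / 2 + c)) 1
      rw [Real.rpow_one] at h
      rw [← h]; congr 1; ring
    rw [hf'_def]
    simp only [e1, e2, e3]
    field_simp
    ring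
  have hFTC : ∫ x in a..1, f' x = F 1 - F a :=
    integral_eq_sub_of_hasDerivAt_of_le ha1.le hF_cont hF_deriv hf'_int
  have hF1 : F 1 = 0 := by
    simp [hF_def, Real.zero_rpow hc0.ne']
  have hFa : F a = -((1 - a) ^ c * a ^ (1 / 2 - c)) := rfl
  have hEq : EqOn (fun x : ℝ => (1 - x) ^ c / x ^ (1 / 2 + c) * (1 / 2 + c * (1 / (1 - x))))
      (fun x => f' x + g x) (uIcc a 1) := by
    rw [huIcc]
    intro x hx
    rcases eq_or_lt_of_le hx.2 with h1x | h1x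
    · subst h1x
      simp [hf'_def, hg_def, show (1:ℝ) - 1 = 0 by norm_num, Real.zero_rpow hc0.ne',
        Real.zero_rpow (show c - 1 ≠ 0 by intro h; nlinarith)]
    · have hx0 : 0 < x := lt_of_lt_of_le ha0 hx.1
      have hu : 0 < 1 - x := by linarith
      have hxp : (0:ℝ) < x ^ (1 / 2 + c) := Real.rpow_pos_of_pos hx0 _
      simp only [hf'_def, hg_def]
      rw [Real.rpow_neg hx0.le, Real.rpow_sub hu, Real.rpow_one]
      field_simp
      ring
  have key : intI s a 1 = (∫ x in a..1, f' x) + ∫ x in a..1, g x := by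
    rw [intI]
    rw [show (fun x : ℝ => (1 - x) ^ (1 / (2 * s)) / x ^ ((1 + s) / (2 * s)) *
        (1 / 2 + 1 / (2 * s) * (1 / (1 - x)))) =
        (fun x : ℝ => (1 - x) ^ c / x ^ (1 / 2 + c) * (1 / 2 + c * (1 / (1 - x)))) by
      rw [← hc_def, ← he]]
    rw [intervalIntegral.integral_congr hEq]
    exact intervalIntegral.integral_add hf'_int hg_int
  rw [key, hFTC, hF1, hFa]
  ring

/-- For fixed `a ∈ (0,1)`, the asymptotic genetic weight
`a^{(1+s)/(2s)} (1−a)^{−1/(2s)} ∫_a^1 (1−x)^{1/(2s)} x^{−(1+s)/(2s)} (1/2 + 1/(2s(1−x))) dx`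
converges to `2√a − a` as `s → ∞`. -/
theorem asymptotic_weight_tendsto_strong_selection
    (a : ℝ) (ha : a ∈ Set.Ioo (0 : ℝ) 1) :
    Tendsto (fun s : ℝ =>
        a ^ ((1 + s) / (2 * s)) / (1 - a) ^ (1 / (2 * s)) * intI s a 1)
      atTop (nhds (2 * Real.sqrt a - a)) := by
  obtain ⟨ha0, ha1⟩ := ha
  have h1a : (0:ℝ) < 1 - a := by linarith
  have h2s : Tendsto (fun s : ℝ => 2 * s) atTop atTop :=
    (tendsto_const_mul_atTop_of_pos two_pos).mpr tendsto_id
  have hc : Tendsto (fun s : ℝ => 1 / (2 * s)) atTop (nhds 0) := by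
    have h := tendsto_inv_atTop_zero.comp h2s
    simp only [Function.comp_def] at h
    exact h.congr fun s => (one_div _).symm
  have he : Tendsto (fun s : ℝ => (1 + s) / (2 * s)) atTop (nhds ((1:ℝ) / 2)) := by
    have h : Tendsto (fun s : ℝ => 1 / (2 * s) + 1 / 2) atTop (nhds ((0:ℝ) + 1 / 2)) :=
      hc.add tendsto_const_nhds
    rw [zero_add] at h
    apply h.congr'
    filter_upwards [eventually_ge_atTop (1:ℝ)] with s hs
    have hs0 : s ≠ 0 := by linarith
    field_simp
  have hA : Tendsto (fun s : ℝ => a ^ ((1 + s) / (2 * s))) atTop (nhds (Real.sqrt a)) := by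
    have h := (Real.continuousAt_const_rpow (b := (1:ℝ)/2) ha0.ne').tendsto.comp he
    simp only [Function.comp_def] at h
    rw [Real.sqrt_eq_rpow]
    exact h
  have hB : Tendsto (fun s : ℝ => (1 - a) ^ (1 / (2 * s))) atTop (nhds 1) := by
    have h := (Real.continuousAt_const_rpow (b := (0:ℝ)) h1a.ne').tendsto.comp hc
    simp only [Function.comp, Real.rpow_zero] at h
    exact h
  have hC : Tendsto (fun s : ℝ => a ^ (1 / 2 - 1 / (2 * s))) atTop (nhds (Real.sqrt a)) := by
    have hexp : Tendsto (fun s : ℝ => 1 / 2 - 1 / (2 * s)) atTop (nhds ((1:ℝ) / 2)) := by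
      have h := (tendsto_const_nhds (x := (1:ℝ)/2) (f := atTop)).sub hc
      simpa using h
    have h := (Real.continuousAt_const_rpow (b := (1:ℝ)/2) ha0.ne').tendsto.comp hexp
    simp only [Function.comp_def] at h
    rw [Real.sqrt_eq_rpow]
    exact h
  have hone : ∀ᵐ x : ℝ ∂MeasureTheory.volume, x ≠ 1 := by
    rw [MeasureTheory.ae_iff]
    simpa using MeasureTheory.measure_singleton (1:ℝ)
  have hJ : Tendsto (fun s : ℝ => ∫ x in a..1, (1 - x) ^ (1 / (2 * s)) * x ^ (-(1 / 2 + 1 / (2 * s))))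
      atTop (nhds (∫ x in a..1, x ^ (-(1:ℝ) / 2))) := by
    apply intervalIntegral.tendsto_integral_filter_of_dominated_convergence (fun _ => a⁻¹)
    · filter_upwards [eventually_ge_atTop (1:ℝ)] with s hs
      have hs0 : (0:ℝ) < s := by linarith
      apply ContinuousOn.aestronglyMeasurable _ measurableSet_uIoc
      rw [uIoc_of_le ha1.le]
      apply ContinuousOn.mul
      · exact ((continuous_const.sub continuous_id).rpow_const
          (fun x => Or.inr (by positivity))).continuousOn
      · intro x hx
        exact (Real.continuousAt_rpow_const x _
          (Or.inl (lt_trans ha0 hx.1).ne')).continuousWithinAt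
    · filter_upwards [eventually_ge_atTop (1:ℝ)] with s hs
      filter_upwards with x hx
      rw [uIoc_of_le ha1.le] at hx
      have hx0 : 0 < x := lt_trans ha0 hx.1
      have hx1 : x ≤ 1 := hx.2
      have hc0 : 0 < 1 / (2 * s) := by positivity
      have hc2 : 1 / (2 * s) ≤ 1 / 2 := by
        rw [div_le_div_iff₀ (by positivity) (by norm_num)]; linarith
      have hb1 : (1 - x) ^ (1 / (2 * s)) ≤ 1 :=
        Real.rpow_le_one (by linarith) (by linarith) hc0.le
      have hb2 : x ^ (-(1 / 2 + 1 / (2 * s))) ≤ a⁻¹ := by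
        calc x ^ (-(1 / 2 + 1 / (2 * s))) ≤ x ^ (-1 : ℝ) :=
              Real.rpow_le_rpow_of_exponent_ge hx0 hx1 (by linarith)
          _ = x⁻¹ := Real.rpow_neg_one x
          _ ≤ a⁻¹ := by
              apply inv_anti₀ ha0 hx.1.le
      have hnn1 : (0:ℝ) ≤ (1 - x) ^ (1 / (2 * s)) := Real.rpow_nonneg (by linarith) _
      have hnn2 : (0:ℝ) ≤ x ^ (-(1 / 2 + 1 / (2 * s))) := Real.rpow_nonneg hx0.le _
      rw [Real.norm_eq_abs, abs_of_nonneg (mul_nonneg hnn1 hnn2)]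
      calc (1 - x) ^ (1 / (2 * s)) * x ^ (-(1 / 2 + 1 / (2 * s)))
          ≤ 1 * a⁻¹ := mul_le_mul hb1 hb2 hnn2 zero_le_one
        _ = a⁻¹ := one_mul _
    · exact _root_.intervalIntegrable_const
    · filter_upwards [hone] with x hx1 hx
      rw [uIoc_of_le ha1.le] at hx
      have hx0 : 0 < x := lt_trans ha0 hx.1
      have hxlt : x < 1 := lt_of_le_of_ne hx.2 hx1
      have hu : (0:ℝ) < 1 - x := by linarith
      have t1 : Tendsto (fun s : ℝ => (1 - x) ^ (1 / (2 * s))) atTop (nhds 1) := by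
        have h := (Real.continuousAt_const_rpow (b := (0:ℝ)) hu.ne').tendsto.comp hc
        simp only [Function.comp, Real.rpow_zero] at h
        exact h
      have t2 : Tendsto (fun s : ℝ => x ^ (-(1 / 2 + 1 / (2 * s)))) atTop
          (nhds (x ^ (-(1:ℝ) / 2))) := by
        have hexp : Tendsto (fun s : ℝ => -(1 / 2 + 1 / (2 * s))) atTop (nhds (-(1:ℝ) / 2)) := by
          have h := ((tendsto_const_nhds (x := (1:ℝ)/2) (f := atTop)).add hc).neg
          simpa [neg_div] using h
        exact (Real.continuousAt_const_rpow (b := -(1:ℝ)/2) hx0.ne').tendsto.comp hexp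
      simpa using t1.mul t2
  have hint : (∫ x in a..1, x ^ (-(1:ℝ) / 2)) = 2 - 2 * Real.sqrt a := by
    rw [integral_rpow (Or.inl (by norm_num))]
    rw [Real.sqrt_eq_rpow]
    norm_num
    ring
  rw [hint] at hJ
  have hfinal := (hA.div hB one_ne_zero).mul ((hB.mul hC).add hJ)
  simp only [Pi.div_apply] at hfinal
  have hval : Real.sqrt a / 1 * (1 * Real.sqrt a + (2 - 2 * Real.sqrt a))
      = 2 * Real.sqrt a - a := by
    rw [div_one, one_mul]
    nlinarith [Real.mul_self_sqrt ha0.le]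
  rw [hval] at hfinal
  apply hfinal.congr'
  filter_upwards [eventually_ge_atTop (1:ℝ)] with s hs
  rw [intI_eq a ⟨ha0, ha1⟩ s hs]
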